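/- Let n ≥ 2 and suppose ω₀,...,ω_{n-1}, t₁,...,t_{n-1} satisfy the extremum conditions Sₖ = (tₖ + t_{k+1})/2 for k = 0,...,n-1 and tₖ = S_{k-1} + ωₖ/2 for k = 1,...,n-1, with t₀ = 0, tₙ = 1, Sₖ = ∑_{j=0}^{k} ωⱼ. Then ω₀ = 1/(2n), ωₖ = 1/n for k = 1,...,n-1, and tₖ = k/n for k = 1,...,n-1. -/

import Mathlib

theorem stmt_8 (n : ℕ) (hn : 2 ≤ n) (ω t : ℕ → ℝ)
    (ht0 : t 0 = 0) (htn : t n = 1)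
    (hS : ∀ k < n, (∑ j ∈ Finset.range (k + 1), ω j) = (t k + t (k + 1)) / 2)
    (ht : ∀ k, 1 ≤ k → k ≤ n - 1 →
      t k = (∑ j ∈ Finset.range k, ω j) + ω k / 2) :
    ω 0 = 1 / (2 * n) ∧
    (∀ k, 1 ≤ k → k ≤ n - 1 → ω k = 1 / n) ∧
    (∀ k, 1 ≤ k → k ≤ n - 1 → t k = k / n) := by
  obtain ⟨m, rfl⟩ : ∃ m, n = m + 2 := ⟨n - 2, by omega⟩
  -- ω 0 = ω 1 / 2
  have h0 := hS 0 (by omega)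
  have h1 := ht 1 le_rfl (by omega)
  simp [Finset.sum_range_one, ht0] at h0 h1
  have hω0 : ω 0 = ω 1 / 2 := by linarith
  -- recurrence: ω (k+1) = ω k for 1 ≤ k ≤ m
  have hrec : ∀ k, 1 ≤ k → k ≤ m → ω (k + 1) = ω k := by
    intro k hk1 hkm
    have hk := hS k (by omega)
    have htk := ht k hk1 (by omega)
    have htk1 := ht (k + 1) (by omega) (by omega)
    rw [Finset.sum_range_succ] at hk htk1
    linarith
  -- all equal to ω 1
  have hωeq : ∀ k, 1 ≤ k → k ≤ m + 1 → ω k = ω 1 := by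
    intro k
    induction k with
    | zero => omega
    | succ j ih =>
      intro _ hj
      rcases Nat.eq_or_lt_of_le (show 1 ≤ j + 1 from by omega) with h | h
      · rw [← h]
      · have hj1 : 1 ≤ j := by omega
        rw [hrec j hj1 (by omega), ih hj1 (by omega)]
  -- partial sums
  have hsum : ∀ j, j ≤ m + 1 → (∑ i ∈ Finset.range (j + 1), ω i)
      = ω 1 / 2 + j * ω 1 := by
    intro j
    induction j with
    | zero => intro _; simp [Finset.sum_range_one, hω0]
    | succ i ih =>
      intro hi
      rw [Finset.sum_range_succ, ih (by omega), hωeq (i + 1) (by omega) (by omega)]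
      push_cast; ring
  -- last equation gives ω 1 = 1 / n
  have hlast := hS (m + 1) (by omega)
  have htm := ht (m + 1) (by omega) (by omega)
  rw [hsum (m + 1) le_rfl] at hlast
  rw [show m + 1 = m + 0 + 1 from rfl, hsum m (by omega),
    hωeq (m + 0 + 1) (by omega) (by omega)] at htm
  rw [htm, htn] at hlast
  have hω1 : ω 1 = 1 / (m + 2) := by
    have h2 : (0:ℝ) < (m:ℝ) + 2 := by positivity
    field_simp
    push_cast at hlast ⊢
    nlinarith
  refine ⟨?_, ?_, ?_⟩
  · rw [hω0, hω1]; push_cast; rw [div_div]; ring_nf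
  · intro k hk1 hk2
    rw [hωeq k hk1 (by omega), hω1]; push_cast; ring
  · intro k hk1 hk2
    have htk := ht k hk1 hk2
    obtain ⟨j, rfl⟩ : ∃ j, k = j + 1 := ⟨k - 1, by omega⟩
    rw [hsum j (by omega), hωeq (j + 1) (by omega) (by omega), hω1] at htk
    rw [htk]
    have h2 : (0:ℝ) < (m:ℝ) + 2 := by positivity
    field_simp
    push_cast
    ring
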